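/- Let g : [-1,1] → ℝ be nonnegative, increasing and concave on [-1,1], normalized so that (1/π)∫_{-1}^{1} g(t)/√(1-t²) dt = 1. Then: (a) the function t ↦ g(t)/(1+t) is decreasing on (-1,1]; (b) g(1) ≤ 2; (c) g(0) ≥ 1. -/

import Mathlib

open Real MeasureTheory Set

lemma sin_image_Ioo : Real.sin '' Set.Ioo (-(π/2)) (π/2) = Set.Ioo (-1:ℝ) 1 := by
  ext y
  constructor
  · rintro ⟨x, hx, rfl⟩
    have h1 : -(π/2) ∈ Icc (-(π/2)) (π/2) := ⟨le_refl _, by linarith [pi_pos]⟩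
    have h2 : (π/2) ∈ Icc (-(π/2)) (π/2) := ⟨by linarith [pi_pos], le_refl _⟩
    constructor
    · have := Real.strictMonoOn_sin h1 (Ioo_subset_Icc_self hx) hx.1
      simpa using this
    · have := Real.strictMonoOn_sin (Ioo_subset_Icc_self hx) h2 hx.2
      simpa using this
  · intro hy
    exact ⟨Real.arcsin y, ⟨Real.neg_pi_div_two_lt_arcsin.2 hy.1, Real.arcsin_lt_pi_div_two.2 hy.2⟩,
      Real.sin_arcsin hy.1.le hy.2.le⟩

lemma hasDeriv_sin : ∀ x ∈ Set.Ioo (-(π/2)) (π/2),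
    HasDerivWithinAt Real.sin (Real.cos x) (Set.Ioo (-(π/2)) (π/2)) x :=
  fun x _ => (Real.hasDerivAt_sin x).hasDerivWithinAt

lemma injOn_sin_Ioo : Set.InjOn Real.sin (Set.Ioo (-(π/2)) (π/2)) :=
  Real.injOn_sin.mono Set.Ioo_subset_Icc_self

lemma cos_smul_eq_one : ∀ x ∈ Set.Ioo (-(π/2)) (π/2),
    |Real.cos x| • (1 / Real.sqrt (1 - (Real.sin x) ^ 2)) = 1 := by
  intro x hx
  have hc : 0 < Real.cos x := Real.cos_pos_of_mem_Ioo hx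
  rw [← Real.cos_eq_sqrt_one_sub_sin_sq hx.1.le hx.2.le, abs_of_pos hc, smul_eq_mul]
  field_simp

lemma int_one_div_sqrt : IntegrableOn (fun x => 1 / Real.sqrt (1 - x ^ 2)) (Set.Ioo (-1:ℝ) 1) ∧
    ∫ x in Set.Ioo (-1:ℝ) 1, 1 / Real.sqrt (1 - x ^ 2) = π := by
  have hs : MeasurableSet (Set.Ioo (-(π/2)) (π/2)) := measurableSet_Ioo
  have himg := sin_image_Ioo
  constructor
  · rw [← himg,
      integrableOn_image_iff_integrableOn_abs_deriv_smul hs hasDeriv_sin injOn_sin_Ioo]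
    exact (integrableOn_const measure_Ioo_lt_top.ne enorm_ne_top).congr_fun
      (fun x hx => (cos_smul_eq_one x hx).symm) hs
  · rw [← himg,
      integral_image_eq_integral_abs_deriv_smul hs hasDeriv_sin injOn_sin_Ioo]
    rw [setIntegral_congr_fun hs cos_smul_eq_one, setIntegral_const, smul_eq_mul, mul_one,
      measureReal_def, Real.volume_Ioo, ENNReal.toReal_ofReal (by linarith [pi_pos])]
    ring

lemma II1 : IntervalIntegrable (fun x => 1 / Real.sqrt (1 - x ^ 2)) volume (-1:ℝ) 1 := by
  rw [intervalIntegrable_iff_integrableOn_Ioc_of_le (by norm_num)]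
  exact int_one_div_sqrt.1.congr_set_ae Ioo_ae_eq_Ioc.symm

lemma IV1 : ∫ x in (-1:ℝ)..1, 1 / Real.sqrt (1 - x ^ 2) = π := by
  rw [intervalIntegral.integral_of_le (by norm_num), integral_Ioc_eq_integral_Ioo]
  exact int_one_div_sqrt.2

lemma dominated_II {f : ℝ → ℝ} (hmeas : AEStronglyMeasurable f (volume.restrict (Set.Ioc (-1:ℝ) 1)))
    (C : ℝ) (hb : ∀ x ∈ Set.Ioc (-1:ℝ) 1, |f x| ≤ C * (1 / Real.sqrt (1 - x ^ 2))) :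
    IntervalIntegrable f volume (-1:ℝ) 1 := by
  rw [intervalIntegrable_iff_integrableOn_Ioc_of_le (by norm_num)]
  have hC : IntegrableOn (fun x => C * (1 / Real.sqrt (1 - x ^ 2))) (Set.Ioc (-1:ℝ) 1) := by
    have := II1
    rw [intervalIntegrable_iff_integrableOn_Ioc_of_le (by norm_num : (-1:ℝ) ≤ 1)] at this
    exact this.const_mul C
  apply hC.mono' hmeas
  rw [ae_restrict_iff' measurableSet_Ioc]
  filter_upwards with x hx
  simpa [Real.norm_eq_abs] using hb x hx

lemma div_le_div_nonneg_denom {a b c : ℝ} (h : a ≤ b) (hc : 0 ≤ c) : a / c ≤ b / c := by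
  rcases eq_or_lt_of_le hc with h0 | h0
  · rw [← h0, div_zero, div_zero]
  · exact (div_le_div_iff_of_pos_right h0).2 h

theorem stmt_7 (g : ℝ → ℝ)
    (hg0 : ∀ x ∈ Set.Icc (-1:ℝ) 1, 0 ≤ g x)
    (hgmono : MonotoneOn g (Set.Icc (-1:ℝ) 1))
    (hgconc : ConcaveOn ℝ (Set.Icc (-1:ℝ) 1) g)
    (hnorm : (1 / π) * ∫ s in (-1:ℝ)..1, g s / Real.sqrt (1 - s ^ 2) = 1) :
    AntitoneOn (fun s => g s / (1 + s)) (Set.Ioc (-1:ℝ) 1) ∧ g 1 ≤ 2 ∧ 1 ≤ g 0 := by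
  have hπ : (0:ℝ) < π := pi_pos
  -- the interval integral equals π
  have hInt : ∫ s in (-1:ℝ)..1, g s / Real.sqrt (1 - s ^ 2) = π := by
    field_simp at hnorm; linarith
  -- membership facts
  have hm1 : (-1:ℝ) ∈ Set.Icc (-1:ℝ) 1 := by norm_num
  have hp1 : (1:ℝ) ∈ Set.Icc (-1:ℝ) 1 := by norm_num
  -- part (a)
  have parta : AntitoneOn (fun s => g s / (1 + s)) (Set.Ioc (-1:ℝ) 1) := by
    intro a ha b hb hab
    have ha1 : (0:ℝ) < 1 + a := by linarith [ha.1]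
    have hb1 : (0:ℝ) < 1 + b := by linarith [hb.1]
    have haI : a ∈ Set.Icc (-1:ℝ) 1 := ⟨ha.1.le, ha.2⟩
    have hbI : b ∈ Set.Icc (-1:ℝ) 1 := ⟨hb.1.le, hb.2⟩
    have hbne : b + 1 ≠ 0 := by linarith
    have hco1 : (0:ℝ) ≤ (b - a) / (b + 1) := div_nonneg (by linarith) (by linarith)
    have hco2 : (0:ℝ) ≤ (a + 1) / (b + 1) := div_nonneg (by linarith) (by linarith)
    have hsum : (b - a) / (b + 1) + (a + 1) / (b + 1) = 1 := by
      rw [← add_div, div_eq_one_iff_eq hbne]; ring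
    have key := hgconc.2 hm1 hbI hco1 hco2 hsum
    rw [smul_eq_mul, smul_eq_mul, smul_eq_mul, smul_eq_mul] at key
    have hxa : (b - a) / (b + 1) * (-1) + (a + 1) / (b + 1) * b = a := by
      field_simp; ring
    rw [hxa] at key
    have hgm1 : 0 ≤ g (-1) := hg0 _ hm1
    have h1 : (a + 1) / (b + 1) * g b ≤ g a := by nlinarith [mul_nonneg hco1 hgm1]
    simp only
    rw [div_le_div_iff₀ hb1 ha1]
    have h2 := mul_le_mul_of_nonneg_right h1 hb1.le
    have h3 : (a + 1) / (b + 1) * g b * (1 + b) = g b * (1 + a) := by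
      field_simp; ring
    linarith
  -- measurability and integrability
  have hsqrt_meas : Measurable fun x : ℝ => Real.sqrt (1 - x ^ 2) :=
    (Real.continuous_sqrt.comp (by continuity)).measurable
  have hgae : AEMeasurable g (volume.restrict (Set.Ioc (-1:ℝ) 1)) :=
    aemeasurable_restrict_of_monotoneOn measurableSet_Ioc (hgmono.mono Set.Ioc_subset_Icc_self)
  have hganti : AntitoneOn (fun x => g (-x)) (Set.Ioc (-1:ℝ) 1) := by
    intro a ha b hb hab
    exact hgmono (⟨by linarith [hb.2], by linarith [hb.1]⟩ : -b ∈ Set.Icc (-1:ℝ) 1)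
      (⟨by linarith [ha.2], by linarith [ha.1]⟩ : -a ∈ Set.Icc (-1:ℝ) 1) (by linarith)
  have hgnae : AEMeasurable (fun x => g (-x)) (volume.restrict (Set.Ioc (-1:ℝ) 1)) :=
    aemeasurable_restrict_of_antitoneOn measurableSet_Ioc hganti
  have hg1 : 0 ≤ g 1 := hg0 _ hp1
  have hIoc_Icc : Set.Ioc (-1:ℝ) 1 ⊆ Set.Icc (-1:ℝ) 1 := Set.Ioc_subset_Icc_self
  have hbnd : ∀ x ∈ Set.Ioc (-1:ℝ) 1, |g x / Real.sqrt (1 - x ^ 2)|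
      ≤ g 1 * (1 / Real.sqrt (1 - x ^ 2)) := by
    intro x hx
    have hxI := hIoc_Icc hx
    rw [abs_div, abs_of_nonneg (hg0 _ hxI), abs_of_nonneg (Real.sqrt_nonneg _), mul_one_div]
    exact div_le_div_nonneg_denom (hgmono hxI hp1 hxI.2) (Real.sqrt_nonneg _)
  have I1 : IntervalIntegrable (fun x => g x / Real.sqrt (1 - x ^ 2)) volume (-1:ℝ) 1 :=
    dominated_II (hgae.div hsqrt_meas.aemeasurable).aestronglyMeasurable (g 1) hbnd
  have I2 : IntervalIntegrable (fun x => g (-x) / Real.sqrt (1 - x ^ 2)) volume (-1:ℝ) 1 := by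
    apply dominated_II (hgnae.div hsqrt_meas.aemeasurable).aestronglyMeasurable (g 1)
    intro x hx
    have hxI : -x ∈ Set.Icc (-1:ℝ) 1 := ⟨by linarith [hx.2], by linarith [hx.1]⟩
    simp only [Pi.div_apply]
    rw [abs_div, abs_of_nonneg (hg0 _ hxI), abs_of_nonneg (Real.sqrt_nonneg _), mul_one_div]
    exact div_le_div_nonneg_denom (hgmono hxI hp1 hxI.2) (Real.sqrt_nonneg _)
  have I3 : IntervalIntegrable (fun x => x / Real.sqrt (1 - x ^ 2)) volume (-1:ℝ) 1 := by
    apply dominated_II (measurable_id.aemeasurable.div hsqrt_meas.aemeasurable).aestronglyMeasurable 1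
    intro x hx
    simp only [Pi.div_apply]
    rw [abs_div, abs_of_nonneg (Real.sqrt_nonneg _), one_mul]
    exact div_le_div_nonneg_denom (abs_le.2 ⟨hx.1.le, hx.2⟩) (Real.sqrt_nonneg _)
  -- odd integral vanishes
  have IV3 : ∫ x in (-1:ℝ)..1, x / Real.sqrt (1 - x ^ 2) = 0 := by
    have h := intervalIntegral.integral_comp_neg (a := (-1:ℝ)) (b := 1)
      (fun x => x / Real.sqrt (1 - x ^ 2))
    simp only [neg_neg] at h
    have h2 : ∫ x in (-1:ℝ)..1, -(x / Real.sqrt (1 - x ^ 2))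
        = ∫ x in (-1:ℝ)..1, x / Real.sqrt (1 - x ^ 2) := by
      rw [← h]
      apply intervalIntegral.integral_congr
      intro x _
      simp [neg_div]
    rw [intervalIntegral.integral_neg] at h2
    linarith
  -- reflected integral
  have IVg2 : ∫ x in (-1:ℝ)..1, g (-x) / Real.sqrt (1 - x ^ 2) = π := by
    have h := intervalIntegral.integral_comp_neg (a := (-1:ℝ)) (b := 1)
      (fun y => g y / Real.sqrt (1 - y ^ 2))
    simp only [neg_neg, neg_sq] at h
    rw [h, hInt]
  constructor
  · exact parta
  constructor
  -- part (b)
  · have hpt : ∀ x ∈ Set.Icc (-1:ℝ) 1,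
        g 1 * ((1 + x) / 2) / Real.sqrt (1 - x ^ 2) ≤ g x / Real.sqrt (1 - x ^ 2) := by
      intro x hx
      have hco1 : (0:ℝ) ≤ (1 - x) / 2 := by linarith [hx.2]
      have hco2 : (0:ℝ) ≤ (1 + x) / 2 := by linarith [hx.1]
      have key := hgconc.2 hm1 hp1 hco1 hco2 (by ring)
      rw [smul_eq_mul, smul_eq_mul, smul_eq_mul, smul_eq_mul] at key
      have hxa : (1 - x) / 2 * (-1) + (1 + x) / 2 * 1 = x := by ring
      rw [hxa] at key
      have hnum : g 1 * ((1 + x) / 2) ≤ g x := by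
        nlinarith [mul_nonneg hco1 (hg0 _ hm1)]
      exact div_le_div_nonneg_denom hnum (Real.sqrt_nonneg _)
    have Ilhs : IntervalIntegrable
        (fun x => g 1 * ((1 + x) / 2) / Real.sqrt (1 - x ^ 2)) volume (-1:ℝ) 1 := by
      have heq : (fun x => g 1 * ((1 + x) / 2) / Real.sqrt (1 - x ^ 2))
          = fun x => g 1 / 2 * (1 / Real.sqrt (1 - x ^ 2))
            + g 1 / 2 * (x / Real.sqrt (1 - x ^ 2)) := by
        funext x; ring
      rw [heq]
      exact (II1.const_mul _).add (I3.const_mul _)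
    have hmono := intervalIntegral.integral_mono_on (by norm_num : (-1:ℝ) ≤ 1) Ilhs I1 hpt
    have hval : ∫ x in (-1:ℝ)..1, g 1 * ((1 + x) / 2) / Real.sqrt (1 - x ^ 2) = g 1 / 2 * π := by
      have hcg : ∫ x in (-1:ℝ)..1, g 1 * ((1 + x) / 2) / Real.sqrt (1 - x ^ 2)
          = ∫ x in (-1:ℝ)..1, (g 1 / 2 * (1 / Real.sqrt (1 - x ^ 2))
            + g 1 / 2 * (x / Real.sqrt (1 - x ^ 2))) :=
        intervalIntegral.integral_congr fun x _ => by ring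
      rw [hcg, intervalIntegral.integral_add (II1.const_mul _) (I3.const_mul _),
        intervalIntegral.integral_const_mul, intervalIntegral.integral_const_mul, IV1, IV3]
      ring
    rw [hval, hInt] at hmono
    nlinarith
  -- part (c)
  · have hpt2 : ∀ x ∈ Set.Icc (-1:ℝ) 1,
        (g x + g (-x)) / Real.sqrt (1 - x ^ 2) ≤ 2 * g 0 * (1 / Real.sqrt (1 - x ^ 2)) := by
      intro x hx
      have hxm : -x ∈ Set.Icc (-1:ℝ) 1 := ⟨by linarith [hx.2], by linarith [hx.1]⟩
      have key := hgconc.2 hx hxm (by norm_num : (0:ℝ) ≤ 1/2) (by norm_num : (0:ℝ) ≤ 1/2)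
        (by norm_num)
      rw [smul_eq_mul, smul_eq_mul, smul_eq_mul, smul_eq_mul] at key
      have hxa : (1:ℝ)/2 * x + 1/2 * (-x) = 0 := by ring
      rw [hxa] at key
      rw [mul_one_div]
      exact div_le_div_nonneg_denom (by linarith) (Real.sqrt_nonneg _)
    have Ilhs2 : IntervalIntegrable
        (fun x => (g x + g (-x)) / Real.sqrt (1 - x ^ 2)) volume (-1:ℝ) 1 := by
      have heq : (fun x => (g x + g (-x)) / Real.sqrt (1 - x ^ 2))
          = fun x => g x / Real.sqrt (1 - x ^ 2) + g (-x) / Real.sqrt (1 - x ^ 2) := by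
        funext x; rw [add_div]
      rw [heq]
      exact I1.add I2
    have hmono := intervalIntegral.integral_mono_on (by norm_num : (-1:ℝ) ≤ 1) Ilhs2
      (II1.const_mul _) hpt2
    have hval : ∫ x in (-1:ℝ)..1, (g x + g (-x)) / Real.sqrt (1 - x ^ 2) = π + π := by
      have hcg : ∫ x in (-1:ℝ)..1, (g x + g (-x)) / Real.sqrt (1 - x ^ 2)
          = ∫ x in (-1:ℝ)..1, (g x / Real.sqrt (1 - x ^ 2) + g (-x) / Real.sqrt (1 - x ^ 2)) :=
        intervalIntegral.integral_congr fun x _ => by rw [add_div]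
      rw [hcg, intervalIntegral.integral_add I1 I2, hInt, IVg2]
    have hrhs : ∫ x in (-1:ℝ)..1, 2 * g 0 * (1 / Real.sqrt (1 - x ^ 2)) = 2 * g 0 * π := by
      rw [intervalIntegral.integral_const_mul, IV1]
    rw [hval, hrhs] at hmono
    nlinarith
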